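/- If G_1 and G_2 are two graphs (with no isolated vertices), then γ_t2(G_1 ∘ G_2) ≤ γ_t2(G_1) + γ_t2(G_2) · (|V(G_1)| − γ_t2(G_1)), where G_1 ∘ G_2 is the corona product. -/

import Mathlib

open SimpleGraph

/-- `D` is a dominating set of `G`: every vertex not in `D` is adjacent to a vertex of `D`. -/
def IsDomSet {V : Type*} (G : SimpleGraph V) (D : Set V) : Prop :=
  ∀ v, v ∉ D → ∃ u ∈ D, G.Adj u v

/-- `D` is a semitotal dominating set of `G`: it is a dominating set and every vertex of `D`
is within distance 2 from another vertex of `D`. -/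
def IsSemitotalDomSet {V : Type*} (G : SimpleGraph V) (D : Set V) : Prop :=
  IsDomSet G D ∧
    ∀ v ∈ D, ∃ u ∈ D, u ≠ v ∧ (G.Adj u v ∨ ∃ w, G.Adj u w ∧ G.Adj w v)

/-- The semitotal domination number: the minimum cardinality of a semitotal dominating set. -/
noncomputable def semitotalDomNum {V : Type*} (G : SimpleGraph V) [Fintype V] : ℕ :=
  sInf {k | ∃ D : Finset V, IsSemitotalDomSet G ↑D ∧ D.card = k}

/-- The domination number: the minimum cardinality of a dominating set. -/
noncomputable def domNum {V : Type*} (G : SimpleGraph V) [Fintype V] : ℕ :=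
  sInf {k | ∃ D : Finset V, IsDomSet G ↑D ∧ D.card = k}

/-- The number of semitotal dominating sets of cardinality `i`. -/
noncomputable def numSemitotalDomSets {V : Type*} (G : SimpleGraph V) [Fintype V] (i : ℕ) : ℕ :=
  Set.ncard {D : Finset V | IsSemitotalDomSet G ↑D ∧ D.card = i}

/-- The number of dominating sets of cardinality `i`. -/
noncomputable def numDomSets {V : Type*} (G : SimpleGraph V) [Fintype V] (i : ℕ) : ℕ :=
  Set.ncard {D : Finset V | IsDomSet G ↑D ∧ D.card = i}

/-- The corona product `G₁ ∘ G₂`: one copy of `G₁`, and for each vertex `i` of `G₁` a copy of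
`G₂` whose vertices are all joined to `i`. -/
def coronaProd {α β : Type*} (G₁ : SimpleGraph α) (G₂ : SimpleGraph β) :
    SimpleGraph (α ⊕ α × β) where
  Adj x y :=
    match x, y with
    | Sum.inl u, Sum.inl v => G₁.Adj u v
    | Sum.inl u, Sum.inr p => u = p.1
    | Sum.inr p, Sum.inl v => p.1 = v
    | Sum.inr p, Sum.inr q => p.1 = q.1 ∧ G₂.Adj p.2 q.2
  symm := by
    constructor
    rintro (u | p) (v | q) h
    · exact h.symm
    · exact h.symm
    · exact h.symm
    · exact ⟨h.1.symm, h.2.symm⟩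
  loopless := by
    constructor
    rintro (u | p) h
    · exact G₁.irrefl h
    · exact G₂.irrefl h.2

/-- For graphs `G₁, G₂` with no isolated vertices,
`γ_t2(G₁ ∘ G₂) ≤ γ_t2(G₁) + γ_t2(G₂) · (|V(G₁)| − γ_t2(G₁))`. -/
theorem semitotalDomNum_corona_le {α β : Type*} [Fintype α] [Fintype β]
    (G₁ : SimpleGraph α) (G₂ : SimpleGraph β)
    (h₁ : ∀ v, ∃ u, G₁.Adj u v) (h₂ : ∀ v, ∃ u, G₂.Adj u v) :
    semitotalDomNum (coronaProd G₁ G₂) ≤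
      semitotalDomNum G₁ + semitotalDomNum G₂ * (Fintype.card α - semitotalDomNum G₁) := by
  classical
  have hne₁ : {k | ∃ D : Finset α, IsSemitotalDomSet G₁ ↑D ∧ D.card = k}.Nonempty := by
    refine ⟨_, Finset.univ, ⟨fun v hv => absurd (by simp) hv, fun v _ => ?_⟩, rfl⟩
    obtain ⟨u, hu⟩ := h₁ v
    exact ⟨u, by simp, hu.ne, Or.inl hu⟩
  have hne₂ : {k | ∃ D : Finset β, IsSemitotalDomSet G₂ ↑D ∧ D.card = k}.Nonempty := by
    refine ⟨_, Finset.univ, ⟨fun v hv => absurd (by simp) hv, fun v _ => ?_⟩, rfl⟩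
    obtain ⟨u, hu⟩ := h₂ v
    exact ⟨u, by simp, hu.ne, Or.inl hu⟩
  obtain ⟨D₁, hD₁, hc₁⟩ := Nat.sInf_mem hne₁
  obtain ⟨D₂, hD₂, hc₂⟩ := Nat.sInf_mem hne₂
  set S : Finset (α × β) := D₁ᶜ ×ˢ D₂ with hS
  set D : Finset (α ⊕ α × β) := D₁.disjSum S with hD
  have hmemD : ∀ x : α ⊕ α × β, x ∈ (↑D : Set (α ⊕ α × β)) ↔
      (∃ v, v ∈ D₁ ∧ x = Sum.inl v) ∨ (∃ p, p ∈ S ∧ x = Sum.inr p) := by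
    rintro (v | p) <;> simp [hD, Finset.mem_disjSum]
  have hmemS : ∀ p : α × β, p ∈ S ↔ p.1 ∉ D₁ ∧ p.2 ∈ D₂ := by
    intro p; simp [hS]
  have hsemi : IsSemitotalDomSet (coronaProd G₁ G₂) ↑D := by
    constructor
    · rintro (v | ⟨a, b⟩) hx
      · have hv : v ∉ D₁ := by
          intro hv; exact hx ((hmemD _).2 (Or.inl ⟨v, hv, rfl⟩))
        obtain ⟨u, hu, hadj⟩ := hD₁.1 v hv
        exact ⟨Sum.inl u, (hmemD _).2 (Or.inl ⟨u, hu, rfl⟩), hadj⟩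
      · by_cases ha : a ∈ D₁
        · exact ⟨Sum.inl a, (hmemD _).2 (Or.inl ⟨a, ha, rfl⟩), rfl⟩
        · have hb : b ∉ D₂ := by
            intro hb
            exact hx ((hmemD _).2 (Or.inr ⟨(a, b), (hmemS _).2 ⟨ha, hb⟩, rfl⟩))
          obtain ⟨u, hu, hadj⟩ := hD₂.1 b hb
          exact ⟨Sum.inr (a, u), (hmemD _).2 (Or.inr ⟨(a, u), (hmemS _).2 ⟨ha, hu⟩, rfl⟩),
            ⟨rfl, hadj⟩⟩
    · rintro (v | ⟨a, b⟩) hx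
      · have hv : v ∈ D₁ := by
          rcases (hmemD _).1 hx with ⟨w, hw, hwe⟩ | ⟨p, _, hpe⟩
          · cases hwe; exact hw
          · exact absurd hpe (by simp)
        obtain ⟨u, hu, hne, hcase⟩ := hD₁.2 v hv
        refine ⟨Sum.inl u, (hmemD _).2 (Or.inl ⟨u, hu, rfl⟩), by simpa using hne, ?_⟩
        rcases hcase with h | ⟨w, hw1, hw2⟩
        · exact Or.inl h
        · exact Or.inr ⟨Sum.inl w, hw1, hw2⟩
      · have hab : a ∉ D₁ ∧ b ∈ D₂ := by
          rcases (hmemD _).1 hx with ⟨w, _, hwe⟩ | ⟨p, hp, hpe⟩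
          · exact absurd hwe (by simp)
          · rw [show p = (a, b) from Sum.inr_injective hpe.symm] at hp
            exact (hmemS _).1 hp
        obtain ⟨u, hu, hne, _⟩ := hD₂.2 b hab.2
        refine ⟨Sum.inr (a, u),
          (hmemD _).2 (Or.inr ⟨(a, u), (hmemS _).2 ⟨hab.1, hu⟩, rfl⟩), ?_, ?_⟩
        · simp [hne]
        · exact Or.inr ⟨Sum.inl a, rfl, rfl⟩
  have hcard : D.card =
      semitotalDomNum G₁ + semitotalDomNum G₂ * (Fintype.card α - semitotalDomNum G₁) := by
    simp only [hD, Finset.card_disjSum, hS, Finset.card_product, Finset.card_compl, hc₁, hc₂,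
      semitotalDomNum, mul_comm]
  calc semitotalDomNum (coronaProd G₁ G₂) ≤ D.card := Nat.sInf_le ⟨D, hsemi, rfl⟩
    _ = _ := hcard
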